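/- Logarithm of a scaled Kronecker product: Let A be a positive definite Hermitian m × m complex matrix, B a positive definite Hermitian k × k complex matrix, and p > 0 a real number. Then log(p · (A ⊗ B)) = (ln p) · 1_{mk} + (log A) ⊗ 1_k + 1_m ⊗ (log B), where A ⊗ B denotes the Kronecker product, 1 denotes identity matrices of the indicated sizes, and ln is the natural logarithm. -/

import Mathlib

open Matrix Kronecker
open scoped ComplexOrder Classical

/-- Matrix logarithm of a Hermitian matrix, obtained by applying the natural logarithm to
each eigenvalue in a spectral decomposition (functional calculus).  Junk value `0` on
non-Hermitian matrices. -/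
noncomputable def matLog {n : Type*} [Fintype n] [DecidableEq n] (A : Matrix n n ℂ) :
    Matrix n n ℂ :=
  if hA : A.IsHermitian then
    (hA.eigenvectorUnitary : Matrix n n ℂ) *
      Matrix.diagonal (fun i => ((Real.log (hA.eigenvalues i) : ℝ) : ℂ)) *
      (star hA.eigenvectorUnitary : Matrix n n ℂ)
  else 0

section Aux

variable {n : Type*} [Fintype n] [DecidableEq n]

/-- star distributes over Kronecker products. -/
lemma star_kronecker {l m o q : Type*} (X : Matrix l m ℂ) (Y : Matrix o q ℂ) :
    (X ⊗ₖ Y)ᴴ = Xᴴ ⊗ₖ Yᴴ := by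
  ext ⟨i, j⟩ ⟨i', j'⟩
  simp [conjTranspose_apply, kroneckerMap_apply, _root_.map_mul]

lemma pow_unitary_conj (U : Matrix n n ℂ) (hU : U ∈ Matrix.unitaryGroup n ℂ)
    (d : n → ℂ) (j : ℕ) :
    (U * Matrix.diagonal d * star U) ^ j = U * Matrix.diagonal (d ^ j) * star U := by
  induction j with
  | zero =>
    simp only [pow_zero, Pi.one_def, Matrix.diagonal_one, Matrix.mul_one]
    exact (Matrix.mem_unitaryGroup_iff.mp hU).symm
  | succ j ih =>
    rw [pow_succ, ih, pow_succ]
    have h' : star U * U = 1 := Matrix.mem_unitaryGroup_iff'.mp hU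
    rw [show ∀ (P Q R S T : Matrix n n ℂ), P * Q * R * (S * T * R) = P * (Q * (R * S) * T) * R by
      intros; noncomm_ring, h']
    rw [mul_one, Matrix.diagonal_mul_diagonal]
    rfl

lemma aeval_unitary_conj (U : Matrix n n ℂ) (hU : U ∈ Matrix.unitaryGroup n ℂ)
    (d : n → ℂ) (q : Polynomial ℝ) :
    Polynomial.aeval (U * Matrix.diagonal d * star U) q
      = U * Matrix.diagonal (fun i => Polynomial.aeval (d i) q) * star U := by
  induction q using Polynomial.induction_on' with
  | add p q hp hq =>
    simp only [map_add, hp, hq]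
    rw [← Matrix.diagonal_add, mul_add, add_mul]
  | monomial j a =>
    simp only [Polynomial.aeval_monomial]
    rw [pow_unitary_conj U hU d j, ← Algebra.smul_def]
    have hfun : (fun i => algebraMap ℝ ℂ a * d i ^ j) = a • (d ^ j) := by
      ext i
      simp [Algebra.smul_def]
    rw [hfun, Matrix.diagonal_smul, Matrix.mul_smul, Matrix.smul_mul]

lemma matLog_unitary_conj (U : Matrix n n ℂ) (hU : U ∈ Matrix.unitaryGroup n ℂ)
    (d : n → ℝ) :
    matLog (U * Matrix.diagonal (fun i => ((d i : ℝ) : ℂ)) * star U)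
      = U * Matrix.diagonal (fun i => ((Real.log (d i) : ℝ) : ℂ)) * star U := by
  set X := U * Matrix.diagonal (fun i => ((d i : ℝ) : ℂ)) * star U with hXdef
  have hX : X.IsHermitian := by
    rw [Matrix.IsHermitian, hXdef]
    rw [Matrix.conjTranspose_mul, Matrix.conjTranspose_mul, Matrix.diagonal_conjTranspose]
    have : star (fun i => ((d i : ℝ) : ℂ)) = fun i => ((d i : ℝ) : ℂ) := by
      ext i; simp [Complex.conj_ofReal]
    rw [this]
    simp [mul_assoc, Matrix.star_eq_conjTranspose]
  -- the interpolation polynomial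
  set s : Finset ℝ := (Finset.univ.image hX.eigenvalues) ∪ (Finset.univ.image d) with hs
  set q : Polynomial ℝ := Lagrange.interpolate s id Real.log with hqdef
  have hq : ∀ x ∈ s, q.eval x = Real.log x := by
    intro x hx
    have := Lagrange.eval_interpolate_at_node (v := (id : ℝ → ℝ)) (r := Real.log)
      (Set.injOn_id _) hx
    exact this
  have hUe : (hX.eigenvectorUnitary : Matrix n n ℂ) ∈ Matrix.unitaryGroup n ℂ :=
    hX.eigenvectorUnitary.2
  have key1 : Polynomial.aeval X q
      = U * Matrix.diagonal (fun i => ((Real.log (d i) : ℝ) : ℂ)) * star U := by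
    rw [hXdef, aeval_unitary_conj U hU]
    have hfun : ∀ i, Polynomial.aeval ((d i : ℂ)) q = ((Real.log (d i) : ℝ) : ℂ) := by
      intro i
      rw [show ((d i : ℝ) : ℂ) = algebraMap ℝ ℂ (d i) from rfl,
        Polynomial.aeval_algebraMap_apply, Polynomial.coe_aeval_eq_eval,
        hq (d i) (by simp [hs])]
      exact congrFun Complex.coe_algebraMap _
    simp only [hfun]
  have key2 : Polynomial.aeval X q
      = (hX.eigenvectorUnitary : Matrix n n ℂ) *
        Matrix.diagonal (fun i => ((Real.log (hX.eigenvalues i) : ℝ) : ℂ)) *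
        (star hX.eigenvectorUnitary : Matrix n n ℂ) := by
    conv_lhs => rw [hX.spectral_theorem]; simp only [Unitary.conjStarAlgAut_apply, Unitary.coe_star]
    rw [aeval_unitary_conj _ hUe]
    have hfun : ∀ i, Polynomial.aeval ((RCLike.ofReal ∘ hX.eigenvalues) i : ℂ) q
        = ((Real.log (hX.eigenvalues i) : ℝ) : ℂ) := by
      intro i
      rw [show ((RCLike.ofReal ∘ hX.eigenvalues) i : ℂ) = algebraMap ℝ ℂ (hX.eigenvalues i)
        from rfl, Polynomial.aeval_algebraMap_apply, Polynomial.coe_aeval_eq_eval,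
        hq (hX.eigenvalues i) (by simp [hs])]
      exact congrFun Complex.coe_algebraMap _
    simp only [hfun]
  rw [matLog, dif_pos hX, ← key2, key1]

end Aux

/-- Logarithm of a scaled Kronecker product of positive definite Hermitian matrices:
`log(p · (A ⊗ B)) = (ln p) · 1 + (log A) ⊗ 1 + 1 ⊗ (log B)`. -/
theorem matLog_smul_kronecker {m k : ℕ}
    (A : Matrix (Fin m) (Fin m) ℂ) (B : Matrix (Fin k) (Fin k) ℂ)
    (hA : A.PosDef) (hB : B.PosDef) (p : ℝ) (hp : 0 < p) :
    matLog (((p : ℝ) : ℂ) • (A ⊗ₖ B)) =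
      ((Real.log p : ℝ) : ℂ) • (1 : Matrix (Fin m × Fin k) (Fin m × Fin k) ℂ)
        + (matLog A) ⊗ₖ (1 : Matrix (Fin k) (Fin k) ℂ)
        + (1 : Matrix (Fin m) (Fin m) ℂ) ⊗ₖ (matLog B) := by
  have hAh : A.IsHermitian := hA.isHermitian
  have hBh : B.IsHermitian := hB.isHermitian
  set UA : Matrix (Fin m) (Fin m) ℂ := (hAh.eigenvectorUnitary : Matrix (Fin m) (Fin m) ℂ)
  set UB : Matrix (Fin k) (Fin k) ℂ := (hBh.eigenvectorUnitary : Matrix (Fin k) (Fin k) ℂ)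
  have hUA : UA ∈ Matrix.unitaryGroup (Fin m) ℂ := hAh.eigenvectorUnitary.2
  have hUB : UB ∈ Matrix.unitaryGroup (Fin k) ℂ := hBh.eigenvectorUnitary.2
  set U : Matrix (Fin m × Fin k) (Fin m × Fin k) ℂ := UA ⊗ₖ UB with hUdef
  have hstarU : star U = star UA ⊗ₖ star UB := star_kronecker UA UB
  have hU : U ∈ Matrix.unitaryGroup (Fin m × Fin k) ℂ := by
    rw [Matrix.mem_unitaryGroup_iff, hUdef, hstarU, ← Matrix.mul_kronecker_mul,
      Matrix.mem_unitaryGroup_iff.mp hUA, Matrix.mem_unitaryGroup_iff.mp hUB,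
      Matrix.one_kronecker_one]
  set d : Fin m × Fin k → ℝ := fun ij => p * (hAh.eigenvalues ij.1 * hBh.eigenvalues ij.2)
    with hddef
  have hX : ((p : ℝ) : ℂ) • (A ⊗ₖ B)
      = U * Matrix.diagonal (fun ij => ((d ij : ℝ) : ℂ)) * star U := by
    conv_lhs => rw [hAh.spectral_theorem, hBh.spectral_theorem]; simp only [Unitary.conjStarAlgAut_apply, Unitary.coe_star]
    rw [Matrix.mul_kronecker_mul, Matrix.mul_kronecker_mul, Matrix.diagonal_kronecker_diagonal,
      ← hstarU]
    rw [← Matrix.smul_mul, ← Matrix.mul_smul, ← Matrix.diagonal_smul, ← hUdef]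
    congr 2
    refine congrArg Matrix.diagonal (funext fun ij => ?_)
    simp only [hddef, Pi.smul_apply, Function.comp_apply, smul_eq_mul, RCLike.ofReal]
    push_cast
    rfl
  rw [hX, matLog_unitary_conj U hU d]
  have hlog : ∀ ij : Fin m × Fin k,
      Real.log (d ij) = Real.log p + (Real.log (hAh.eigenvalues ij.1)
        + Real.log (hBh.eigenvalues ij.2)) := by
    intro ij
    rw [hddef]
    rw [Real.log_mul (ne_of_gt hp)
      (ne_of_gt (mul_pos (hA.eigenvalues_pos ij.1) (hB.eigenvalues_pos ij.2))),
      Real.log_mul (ne_of_gt (hA.eigenvalues_pos ij.1)) (ne_of_gt (hB.eigenvalues_pos ij.2))]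
  have hdiag : (Matrix.diagonal (fun ij => ((Real.log (d ij) : ℝ) : ℂ))
      : Matrix (Fin m × Fin k) (Fin m × Fin k) ℂ)
      = Matrix.diagonal (fun _ => ((Real.log p : ℝ) : ℂ))
        + (Matrix.diagonal (fun ij : Fin m × Fin k => ((Real.log (hAh.eigenvalues ij.1) : ℝ) : ℂ))
        + Matrix.diagonal (fun ij : Fin m × Fin k =>
            ((Real.log (hBh.eigenvalues ij.2) : ℝ) : ℂ))) := by
    rw [Matrix.diagonal_add, Matrix.diagonal_add]
    refine congrArg Matrix.diagonal (funext fun ij => ?_)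
    rw [hlog ij]
    push_cast
    ring
  rw [hdiag, mul_add, mul_add, add_mul, add_mul, ← add_assoc]
  congr 1
  · -- first two terms
    congr 1
    · -- scalar term
      have : (Matrix.diagonal (fun _ : Fin m × Fin k => ((Real.log p : ℝ) : ℂ)))
          = ((Real.log p : ℝ) : ℂ) • (1 : Matrix (Fin m × Fin k) (Fin m × Fin k) ℂ) := by
        rw [Matrix.smul_one_eq_diagonal]
      rw [this, Matrix.mul_smul, Matrix.smul_mul, Matrix.mul_one,
        Matrix.mem_unitaryGroup_iff.mp hU]
    · -- matLog A ⊗ 1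
      have h1 : (Matrix.diagonal (fun ij : Fin m × Fin k =>
          ((Real.log (hAh.eigenvalues ij.1) : ℝ) : ℂ)))
          = (Matrix.diagonal fun i => ((Real.log (hAh.eigenvalues i) : ℝ) : ℂ)) ⊗ₖ
            (1 : Matrix (Fin k) (Fin k) ℂ) := by
        rw [← Matrix.diagonal_one, Matrix.diagonal_kronecker_diagonal]
        ext ij
        simp
      rw [h1, hUdef, hstarU, ← Matrix.mul_kronecker_mul, ← Matrix.mul_kronecker_mul,
        Matrix.mul_one, Matrix.mem_unitaryGroup_iff.mp hUB, matLog, dif_pos hAh]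
  · -- 1 ⊗ matLog B
    have h1 : (Matrix.diagonal (fun ij : Fin m × Fin k =>
        ((Real.log (hBh.eigenvalues ij.2) : ℝ) : ℂ)))
        = (1 : Matrix (Fin m) (Fin m) ℂ) ⊗ₖ
          (Matrix.diagonal fun i => ((Real.log (hBh.eigenvalues i) : ℝ) : ℂ)) := by
      rw [← Matrix.diagonal_one, Matrix.diagonal_kronecker_diagonal]
      ext ij
      simp
    rw [h1, hUdef, hstarU, ← Matrix.mul_kronecker_mul, ← Matrix.mul_kronecker_mul,
      Matrix.mul_one, Matrix.mem_unitaryGroup_iff.mp hUA, matLog, dif_pos hBh]
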